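/- Let λ_1,…,λ_K be distinct points in the open upper half-plane, z_i(ε) = e^{-2iλ_i ε}, and B_ε(z) = ∏_{i=1}^K (z - z_i(ε))/(1 - z·conj(z_i(ε))). Then for each k, the limit as ε → 0⁺ of 2iε·B_ε'(z_k(ε)) equals (1/(λ_k - conj(λ_k)))·∏_{i≠k} (-(λ_k - λ_i)/(λ_k - conj(λ_i))). -/

import Mathlib

open Filter Complex

private lemma bdl_exp_ne_one {μ : ℂ} (hμ : 0 < μ.im) {ε : ℝ} (hε : 0 < ε) :
    Complex.exp (-2 * Complex.I * μ * ε) ≠ 1 := by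
  intro h
  have habs := congrArg norm h
  rw [Complex.norm_exp, norm_one, Real.exp_eq_one_iff] at habs
  have hre : (-2 * Complex.I * μ * (ε : ℂ)).re = 2 * μ.im * ε := by
    simp [Complex.mul_re, Complex.mul_im]
  rw [hre] at habs
  nlinarith

private lemma bdl_hasDerivAt_exp (a : ℂ) :
    HasDerivAt (fun ε : ℝ => Complex.exp (a * ε)) a 0 := by
  have h : HasDerivAt (fun z : ℂ => Complex.exp (a * z)) a ((0 : ℝ) : ℂ) := by
    simpa using ((hasDerivAt_id ((0:ℝ):ℂ)).const_mul a).cexp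
  simpa using h.comp_ofReal

private lemma bdl_tendsto_div {f : ℝ → ℂ} {f' : ℂ} (h : HasDerivAt f f' 0) (h0 : f 0 = 0) :
    Tendsto (fun ε : ℝ => f ε / ε) (nhdsWithin 0 (Set.Ioi 0)) (nhds f') := by
  have h1 := hasDerivAt_iff_tendsto_slope.mp h
  have h2 : Tendsto (slope f 0) (nhdsWithin 0 (Set.Ioi 0)) (nhds f') := by
    refine h1.mono_left (nhdsWithin_mono 0 ?_)
    intro x hx
    exact ne_of_gt hx
  refine h2.congr fun ε => ?_
  simp [slope, h0, Complex.real_smul, div_eq_inv_mul]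

open Filter in
theorem blaschke_deriv_limit (K : ℕ) (lam : Fin K → ℂ)
    (hinj : Function.Injective lam) (him : ∀ i, 0 < (lam i).im) (k : Fin K) :
    Tendsto (fun ε : ℝ =>
        2 * Complex.I * (ε : ℂ) *
          deriv (fun ζ : ℂ => ∏ i,
              (ζ - Complex.exp (-2 * Complex.I * lam i * ε)) /
                (1 - ζ * (starRingEnd ℂ) (Complex.exp (-2 * Complex.I * lam i * ε))))
            (Complex.exp (-2 * Complex.I * lam k * ε)))
      (nhdsWithin 0 (Set.Ioi 0))
      (nhds ((1 / (lam k - (starRingEnd ℂ) (lam k))) *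
        ∏ i ∈ Finset.univ.erase k,
          (-(lam k - lam i) / (lam k - (starRingEnd ℂ) (lam i))))) := by
  classical
  set a : Fin K → ℂ := fun i => -2 * Complex.I * lam i with ha
  set c : Fin K → ℂ := fun i => -2 * Complex.I * (lam k - (starRingEnd ℂ) (lam i)) with hc
  have him' : ∀ i, 0 < (lam k - (starRingEnd ℂ) (lam i)).im := by
    intro i
    have := him i; have := him k
    simp [Complex.sub_im, Complex.conj_im]
    linarith
  have hd_ne : ∀ i, lam k - (starRingEnd ℂ) (lam i) ≠ 0 := by
    intro i h0
    have := him' i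
    rw [h0] at this
    simp at this
  have h2I : (2 * Complex.I : ℂ) ≠ 0 := by
    simp [Complex.I_ne_zero]
  have hc_ne : ∀ i, -(c i) ≠ 0 := by
    intro i
    simp only [hc, neg_ne_zero]
    exact mul_ne_zero (by simpa using h2I) (hd_ne i)
  -- the conjugate identity
  have hconj : ∀ (i : Fin K) (ε : ℝ),
      (starRingEnd ℂ) (Complex.exp (a i * ε)) = Complex.exp ((starRingEnd ℂ) (a i) * ε) := by
    intro i ε
    rw [← Complex.exp_conj, map_mul, Complex.conj_ofReal]
  have hck : ∀ i, c i = a k + (starRingEnd ℂ) (a i) := by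
    intro i
    simp only [ha, hc, map_mul]
    simp [Complex.conj_I, map_ofNat]
    ring
  -- eventual equality with the "slope form" function
  have heq : ∀ ε : ℝ, 0 < ε →
      2 * Complex.I * (ε : ℂ) *
          deriv (fun ζ : ℂ => ∏ i,
              (ζ - Complex.exp (-2 * Complex.I * lam i * ε)) /
                (1 - ζ * (starRingEnd ℂ) (Complex.exp (-2 * Complex.I * lam i * ε))))
            (Complex.exp (-2 * Complex.I * lam k * ε)) =
      (2 * Complex.I) * (((1 - Complex.exp (c k * ε)) / ε)⁻¹) *
        ∏ i ∈ Finset.univ.erase k,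
          (((Complex.exp (a k * ε) - Complex.exp (a i * ε)) / ε) /
            ((1 - Complex.exp (c i * ε)) / ε)) := by
    intro ε hε
    have hεC : ((ε : ℂ)) ≠ 0 := by exact_mod_cast ne_of_gt hε
    have hexp : ∀ i : Fin K, (-2 * Complex.I * lam i * (ε:ℂ)) = a i * ε := by
      intro i; simp only [ha]
    -- denominators nonzero
    have hwk : ∀ i : Fin K,
        Complex.exp (a k * ε) * (starRingEnd ℂ) (Complex.exp (a i * ε)) =
          Complex.exp (c i * ε) := by
      intro i
      rw [hconj, ← Complex.exp_add, hck]
      ring_nf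
    have hDne : ∀ i : Fin K, 1 - Complex.exp (a k * ε) *
        (starRingEnd ℂ) (Complex.exp (a i * ε)) ≠ 0 := by
      intro i
      rw [hwk i, sub_ne_zero]
      simp only [hc]
      exact Ne.symm (bdl_exp_ne_one (him' i) hε)
    -- derivative of each factor
    set w : Fin K → ℂ := fun i => Complex.exp (a i * ε) with hw
    set f : Fin K → ℂ → ℂ := fun i ζ => (ζ - w i) / (1 - ζ * (starRingEnd ℂ) (w i)) with hf
    set f' : Fin K → ℂ := fun i =>
      ((1 : ℂ) * (1 - w k * (starRingEnd ℂ) (w i)) - (w k - w i) * (-(starRingEnd ℂ) (w i))) /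
        (1 - w k * (starRingEnd ℂ) (w i)) ^ 2 with hf'
    have hfd : ∀ i ∈ (Finset.univ : Finset (Fin K)), HasDerivAt (f i) (f' i) (w k) := by
      intro i _
      have hnum : HasDerivAt (fun ζ : ℂ => ζ - w i) 1 (w k) := by
        simpa using (hasDerivAt_id (w k)).sub_const (w i)
      have hden : HasDerivAt (fun ζ : ℂ => 1 - ζ * (starRingEnd ℂ) (w i))
          (-(starRingEnd ℂ) (w i)) (w k) := by
        simpa using (hasDerivAt_const (w k) (1:ℂ)).fun_sub
          ((hasDerivAt_id (w k)).mul_const ((starRingEnd ℂ) (w i)))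
      exact hnum.div hden (hDne i)
    have hprod := HasDerivAt.fun_finsetProd hfd
    have hfk0 : f k (w k) = 0 := by simp [hf]
    have hderiv : deriv (fun ζ : ℂ => ∏ i, f i ζ) (w k) =
        (∏ j ∈ Finset.univ.erase k, f j (w k)) * f' k := by
      rw [hprod.deriv]
      rw [Finset.sum_eq_single k]
      · simp
      · intro i _ hik
        have hk : k ∈ Finset.univ.erase i := Finset.mem_erase.mpr ⟨(Ne.symm hik), Finset.mem_univ k⟩
        rw [Finset.prod_eq_zero hk hfk0]
        simp
      · simp
    -- rewrite the goal
    have hgoal : (fun ζ : ℂ => ∏ i,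
        (ζ - Complex.exp (-2 * Complex.I * lam i * ε)) /
          (1 - ζ * (starRingEnd ℂ) (Complex.exp (-2 * Complex.I * lam i * ε)))) =
        fun ζ : ℂ => ∏ i, f i ζ := by
      funext ζ
      refine Finset.prod_congr rfl fun i _ => ?_
      rw [hexp i]
    rw [hgoal, show Complex.exp (-2 * Complex.I * lam k * ε) = w k by rw [hexp k], hderiv]
    -- now pure algebra
    have hfval : ∀ i : Fin K, f i (w k) =
        (Complex.exp (a k * ε) - Complex.exp (a i * ε)) / (1 - Complex.exp (c i * ε)) := by
      intro i
      simp only [hf, hw]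
      rw [hwk i]
    have hDk : (1 - w k * (starRingEnd ℂ) (w k)) = 1 - Complex.exp (c k * ε) := by
      simp only [hw]; rw [hwk k]
    have hDkne : (1 - Complex.exp (c k * ε)) ≠ 0 := by
      rw [← hDk]; simpa only [hw] using hDne k
    have hf'k : f' k = 1 / (1 - Complex.exp (c k * ε)) := by
      simp only [hf', hDk]
      field_simp
      ring
    rw [hf'k, Finset.prod_congr rfl fun i _ => hfval i]
    have hprodeq : ∀ i ∈ Finset.univ.erase k,
        ((Complex.exp (a k * ε) - Complex.exp (a i * ε)) / (ε:ℂ)) /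
            ((1 - Complex.exp (c i * ε)) / (ε:ℂ)) =
          (Complex.exp (a k * ε) - Complex.exp (a i * ε)) / (1 - Complex.exp (c i * ε)) := by
      intro i _
      rw [div_div_div_cancel_right₀]
      exact hεC
    rw [Finset.prod_congr rfl hprodeq, inv_div]
    field_simp
  -- limits of the pieces
  have hT1 : ∀ i : Fin K, Tendsto (fun ε : ℝ =>
      (Complex.exp (a k * ε) - Complex.exp (a i * ε)) / ε)
      (nhdsWithin 0 (Set.Ioi 0)) (nhds (a k - a i)) := by
    intro i
    refine bdl_tendsto_div ((bdl_hasDerivAt_exp (a k)).sub (bdl_hasDerivAt_exp (a i))) ?_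
    simp
  have hT2 : ∀ i : Fin K, Tendsto (fun ε : ℝ =>
      (1 - Complex.exp (c i * ε)) / ε)
      (nhdsWithin 0 (Set.Ioi 0)) (nhds (-(c i))) := by
    intro i
    refine bdl_tendsto_div ?_ ?_
    · simpa using (hasDerivAt_const (0:ℝ) (1:ℂ)).fun_sub (bdl_hasDerivAt_exp (c i))
    · simp
  have hT : Tendsto (fun ε : ℝ =>
      (2 * Complex.I) * (((1 - Complex.exp (c k * ε)) / ε)⁻¹) *
        ∏ i ∈ Finset.univ.erase k,
          (((Complex.exp (a k * ε) - Complex.exp (a i * ε)) / ε) /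
            ((1 - Complex.exp (c i * ε)) / ε)))
      (nhdsWithin 0 (Set.Ioi 0))
      (nhds ((2 * Complex.I) * (-(c k))⁻¹ *
        ∏ i ∈ Finset.univ.erase k, ((a k - a i) / (-(c i))))) := by
    refine Tendsto.mul (Tendsto.mul tendsto_const_nhds ((hT2 k).inv₀ (hc_ne k))) ?_
    exact tendsto_finset_prod _ fun i _ => (hT1 i).div (hT2 i) (hc_ne i)
  -- identify the limit value
  have hval : (2 * Complex.I) * (-(c k))⁻¹ *
      ∏ i ∈ Finset.univ.erase k, ((a k - a i) / (-(c i))) =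
      (1 / (lam k - (starRingEnd ℂ) (lam k))) *
        ∏ i ∈ Finset.univ.erase k,
          (-(lam k - lam i) / (lam k - (starRingEnd ℂ) (lam i))) := by
    congr 1
    · have : -(c k) = (2 * Complex.I) * (lam k - (starRingEnd ℂ) (lam k)) := by
        simp [hc]
      rw [this, mul_inv, ← mul_assoc, mul_inv_cancel₀ h2I, one_mul, one_div]
    · refine Finset.prod_congr rfl fun i _ => ?_
      have h1 : a k - a i = (2 * Complex.I) * (-(lam k - lam i)) := by
        simp [ha]; ring
      have h2 : -(c i) = (2 * Complex.I) * (lam k - (starRingEnd ℂ) (lam i)) := by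
        simp [hc]
      rw [h1, h2, mul_div_mul_left _ _ h2I]
  rw [← hval]
  refine hT.congr' ?_
  filter_upwards [self_mem_nhdsWithin] with ε hε
  exact (heq ε hε).symm
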